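/- Let V be a finite set, let w be an edge conductance function on V such that the network (V, w) is connected, and let (w_n) be a sequence of edge conductance functions on V converging pointwise to w. Then for all sufficiently large n the network (V, w_n) is connected, and the effective resistances converge: R_{w_n}(x,y) → R_w(x,y) for all x, y ∈ V. In other words, the map associating to an edge conductance function its effective resistance is continuous at every connected network. -/

import Mathlib

open scoped Classical

open Filter

/-- An edge conductance function on a set `V`: nonnegative, symmetric, vanishing on the
diagonal. -/
def IsConductance {V : Type*} (w : V → V → ℝ) : Prop :=
  (∀ x y, 0 ≤ w x y) ∧ (∀ x y, w x y = w y x) ∧ (∀ x, w x x = 0)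

/-- The energy of a function `f : V → ℝ` with respect to edge conductances `w`. -/
noncomputable def energy {V : Type*} [Fintype V] (w : V → V → ℝ) (f : V → ℝ) : ℝ :=
  (1 / 2) * ∑ x, ∑ y, w x y * (f x - f y) ^ 2

/-- The network `(V, w)` is connected. -/
def NetworkConnected {V : Type*} (w : V → V → ℝ) : Prop :=
  ∀ x y : V, Relation.ReflTransGen (fun a b => 0 < w a b) x y

/-- The effective resistance associated with the network `(V, w)`. -/
noncomputable def effRes {V : Type*} [Fintype V] (w : V → V → ℝ) (x y : V) : ℝ :=
  if x = y then 0
  else (sInf {e : ℝ | ∃ f : V → ℝ, f x = 1 ∧ f y = 0 ∧ energy w f = e})⁻¹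

section Aux

variable {V : Type*} [Fintype V]

lemma energy_nonneg {w : V → V → ℝ} (hw : IsConductance w) (f : V → ℝ) :
    0 ≤ energy w f := by
  have : (0:ℝ) ≤ ∑ x, ∑ y, w x y * (f x - f y) ^ 2 := by
    refine Finset.sum_nonneg fun x _ => Finset.sum_nonneg fun y _ => ?_
    exact mul_nonneg (hw.1 x y) (sq_nonneg _)
  unfold energy; linarith

lemma term_le_energy {w : V → V → ℝ} (hw : IsConductance w) (f : V → ℝ) (a b : V) :
    (1 / 2) * (w a b * (f a - f b) ^ 2) ≤ energy w f := by
  have h1 : w a b * (f a - f b) ^ 2 ≤ ∑ y, w a y * (f a - f y) ^ 2 :=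
    Finset.single_le_sum (f := fun y => w a y * (f a - f y) ^ 2)
      (fun y _ => mul_nonneg (hw.1 a y) (sq_nonneg _)) (Finset.mem_univ b)
  have h2 : (∑ y, w a y * (f a - f y) ^ 2) ≤ ∑ x, ∑ y, w x y * (f x - f y) ^ 2 :=
    Finset.single_le_sum (f := fun x => ∑ y, w x y * (f x - f y) ^ 2)
      (fun x _ => Finset.sum_nonneg fun y _ => mul_nonneg (hw.1 x y) (sq_nonneg _))
      (Finset.mem_univ a)
  unfold energy; linarith

/-- Along a chain of positive-conductance edges, the squared difference of endpoint values
is controlled by the energy. -/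
lemma chain_bound {w : V → V → ℝ} (hw : IsConductance w) :
    ∀ (l : List V) (a : V), List.Chain (fun u v => 0 < w u v) a l →
      ∃ c : ℝ, 0 < c ∧ ∀ f : V → ℝ,
        (f a - f ((a :: l).getLast (List.cons_ne_nil _ _))) ^ 2 ≤ c * energy w f := by
  intro l
  induction l with
  | nil =>
    intro a _
    refine ⟨1, one_pos, fun f => ?_⟩
    simp only [List.getLast_singleton]
    have := energy_nonneg hw f
    simp; linarith
  | cons b l ih =>
    intro a hch
    rcases List.chain_cons.mp hch with ⟨hab, hbl⟩
    rcases ih b hbl with ⟨c, hc, hcf⟩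
    refine ⟨4 / w a b + 2 * c, by positivity, fun f => ?_⟩
    have h1 : (1 / 2 : ℝ) * (w a b * (f a - f b) ^ 2) ≤ energy w f := term_le_energy hw f a b
    have h2 : (f b - f ((b :: l).getLast (List.cons_ne_nil _ _))) ^ 2 ≤ c * energy w f := hcf f
    have hE : 0 ≤ energy w f := energy_nonneg hw f
    have hgl : ((a :: b :: l).getLast (List.cons_ne_nil _ _)) =
        ((b :: l).getLast (List.cons_ne_nil _ _)) := by
      simp [List.getLast_cons]
    rw [hgl]
    set L := f ((b :: l).getLast (List.cons_ne_nil _ _))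
    have key : (f a - L) ^ 2 ≤ 2 * (f a - f b) ^ 2 + 2 * (f b - L) ^ 2 := by
      nlinarith [sq_nonneg ((f a - f b) - (f b - L))]
    have h3 : (f a - f b) ^ 2 ≤ 2 / w a b * energy w f := by
      rw [div_mul_eq_mul_div, le_div_iff₀ hab]
      nlinarith
    have h4 : 2 * (f a - f b) ^ 2 ≤ 4 / w a b * energy w f := by
      rw [div_mul_eq_mul_div] at h3 ⊢
      rw [le_div_iff₀ hab] at h3 ⊢
      nlinarith
    nlinarith

/-- Positive lower bound on energies of potentials separating `x` and `y`, for a connected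
network. -/
lemma exists_pos_lb {w : V → V → ℝ} (hw : IsConductance w) (hconn : NetworkConnected w)
    (x y : V) :
    ∃ c : ℝ, 0 < c ∧ ∀ f : V → ℝ, f x = 1 → f y = 0 → c ≤ energy w f := by
  rcases List.exists_isChain_cons_of_relationReflTransGen (hconn x y) with ⟨l, hch, hlast⟩
  rcases chain_bound hw l x hch with ⟨c, hc, hcf⟩
  refine ⟨1 / c, by positivity, fun f hfx hfy => ?_⟩
  have := hcf f
  rw [hlast, hfx, hfy] at this
  rw [div_le_iff₀ hc]
  nlinarith

/-- Clamping a function to `[0,1]`. -/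
noncomputable def clamp (f : V → ℝ) : V → ℝ := fun v => max (min (f v) 1) 0

lemma clamp_diff_le (f : V → ℝ) (a b : V) : |clamp f a - clamp f b| ≤ |f a - f b| :=
  le_trans (abs_sup_sub_sup_le_abs _ _ _) (abs_inf_sub_inf_le_abs _ _ _)

lemma clamp_energy_le {w : V → V → ℝ} (hw : IsConductance w) (f : V → ℝ) :
    energy w (clamp f) ≤ energy w f := by
  unfold energy
  have : ∀ a b : V, w a b * (clamp f a - clamp f b) ^ 2 ≤ w a b * (f a - f b) ^ 2 := by
    intro a b
    refine mul_le_mul_of_nonneg_left ?_ (hw.1 a b)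
    rw [← sq_abs (clamp f a - clamp f b), ← sq_abs (f a - f b)]
    exact pow_le_pow_left₀ (abs_nonneg _) (clamp_diff_le f a b) 2
  have hs : (∑ a, ∑ b, w a b * (clamp f a - clamp f b) ^ 2) ≤
      ∑ a, ∑ b, w a b * (f a - f b) ^ 2 :=
    Finset.sum_le_sum fun a _ => Finset.sum_le_sum fun b _ => this a b
  linarith

lemma clamp_sq_le_one (f : V → ℝ) (a b : V) : (clamp f a - clamp f b) ^ 2 ≤ 1 := by
  have h0 : ∀ v, 0 ≤ clamp f v := fun v => le_max_right _ _
  have h1 : ∀ v, clamp f v ≤ 1 := fun v => max_le (min_le_right _ _) zero_le_one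
  nlinarith [h0 a, h0 b, h1 a, h1 b]

lemma energy_diff_le (w' w : V → V → ℝ) (g : V → ℝ) (hg : ∀ a b, (g a - g b) ^ 2 ≤ 1) :
    |energy w' g - energy w g| ≤ (1 / 2) * ∑ a, ∑ b, |w' a b - w a b| := by
  unfold energy
  rw [← mul_sub, abs_mul]
  have h2 : |(1:ℝ)/2| = 1/2 := by norm_num
  rw [h2]
  refine mul_le_mul_of_nonneg_left ?_ (by norm_num)
  rw [← Finset.sum_sub_distrib]
  refine le_trans (Finset.abs_sum_le_sum_abs _ _) (Finset.sum_le_sum fun a _ => ?_)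
  rw [← Finset.sum_sub_distrib]
  refine le_trans (Finset.abs_sum_le_sum_abs _ _) (Finset.sum_le_sum fun b _ => ?_)
  rw [← sub_mul, abs_mul]
  have := hg a b
  have h3 : |(g a - g b) ^ 2| = (g a - g b) ^ 2 := abs_of_nonneg (sq_nonneg _)
  rw [h3]
  nlinarith [abs_nonneg (w' a b - w a b)]

end Aux

/-- Continuity of the effective resistance at connected networks: if conductances `wseq n`
converge pointwise to `w` and `(V, w)` is connected, then `(V, wseq n)` is eventually connected
and the effective resistances converge pointwise. -/
theorem effRes_continuous {V : Type*} [Fintype V] (w : V → V → ℝ) (wseq : ℕ → V → V → ℝ)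
    (hw : IsConductance w) (hconn : NetworkConnected w)
    (hcond : ∀ n, IsConductance (wseq n))
    (hlim : ∀ x y, Tendsto (fun n => wseq n x y) atTop (nhds (w x y))) :
    (∀ᶠ n in atTop, NetworkConnected (wseq n)) ∧
    (∀ x y, Tendsto (fun n => effRes (wseq n) x y) atTop (nhds (effRes w x y))) := by
  -- eventual connectivity
  have hevconn : ∀ᶠ n in atTop, NetworkConnected (wseq n) := by
    have hab : ∀ a b : V, ∀ᶠ n in atTop, (0 < w a b → 0 < wseq n a b) := by
      intro a b
      rcases lt_or_ge 0 (w a b) with h | h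
      · exact ((hlim a b).eventually (eventually_gt_nhds h)).mono fun n hn _ => hn
      · exact Filter.Eventually.of_forall fun n h' => absurd h' (not_lt.mpr h)
    have hall : ∀ᶠ n in atTop, ∀ p : V × V, (0 < w p.1 p.2 → 0 < wseq n p.1 p.2) := by
      rw [Filter.eventually_all]
      exact fun p => hab p.1 p.2
    refine hall.mono fun n hn x y => ?_
    exact Relation.ReflTransGen.mono (fun a b h => hn (a, b) h) x y (hconn x y)
  refine ⟨hevconn, fun x y => ?_⟩
  by_cases hxy : x = y
  · subst hxy
    simp only [effRes, if_pos rfl]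
    exact tendsto_const_nhds
  · -- the infimum sets
    set S : (V → V → ℝ) → Set ℝ :=
      fun w' => {e : ℝ | ∃ f : V → ℝ, f x = 1 ∧ f y = 0 ∧ energy w' f = e} with hS
    have hSne : ∀ w', (S w').Nonempty := by
      intro w'
      exact ⟨energy w' (fun v => if v = x then 1 else 0),
        fun v => if v = x then 1 else 0, by simp, by simp [hxy, Ne.symm hxy], rfl⟩
    have hSbdd : ∀ w', IsConductance w' → BddBelow (S w') := by
      intro w' hw'
      exact ⟨0, fun e ⟨f, _, _, hf⟩ => hf ▸ energy_nonneg hw' f⟩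
    -- positivity of the infimum for w
    rcases exists_pos_lb hw hconn x y with ⟨c, hc, hcf⟩
    have hIpos : c ≤ sInf (S w) := by
      refine le_csInf (hSne w) ?_
      rintro e ⟨f, hfx, hfy, rfl⟩
      exact hcf f hfx hfy
    -- the sum of conductance deviations tends to zero
    set D : ℕ → ℝ := fun n => (1 / 2) * ∑ a, ∑ b, |wseq n a b - w a b| with hD
    have hDlim : Tendsto D atTop (nhds 0) := by
      have : Tendsto (fun n => ∑ a : V, ∑ b : V, |wseq n a b - w a b|) atTop (nhds 0) := by
        have h0 : (0:ℝ) = ∑ a : V, ∑ b : V, (0:ℝ) := by simp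
        rw [h0]
        refine tendsto_finset_sum _ fun a _ => tendsto_finset_sum _ fun b _ => ?_
        have h : Tendsto (fun n => wseq n a b - w a b) atTop (nhds (w a b - w a b)) :=
          (hlim a b).sub tendsto_const_nhds
        rw [sub_self] at h
        simpa using h.abs
      have := this.const_mul (1/2 : ℝ)
      simpa [hD] using this
    -- convergence of the infima
    have hItends : Tendsto (fun n => sInf (S (wseq n))) atTop (nhds (sInf (S w))) := by
      rw [Metric.tendsto_atTop]
      intro ε hε
      -- near-minimizer for w, clamped
      have hlt : sInf (S w) < sInf (S w) + ε / 2 := by linarith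
      rcases exists_lt_of_csInf_lt (hSne w) hlt with ⟨e, ⟨f, hfx, hfy, rfl⟩, hflt⟩
      set g := clamp f with hg
      have hgx : g x = 1 := by simp [hg, clamp, hfx]
      have hgy : g y = 0 := by simp [hg, clamp, hfy]
      have hgE : energy w g < sInf (S w) + ε / 2 :=
        lt_of_le_of_lt (clamp_energy_le hw f) hflt
      have hevD : ∀ᶠ n in atTop, D n < ε / 2 :=
        hDlim.eventually_lt_const (by positivity)
      rw [Filter.eventually_atTop] at hevD
      rcases hevD with ⟨N, hN⟩
      refine ⟨N, fun n hn => ?_⟩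
      have hDn := hN n hn
      rw [Real.dist_eq, abs_sub_lt_iff]
      constructor
      · -- sInf (S (wseq n)) < sInf (S w) + ε
        have hmem : energy (wseq n) g ∈ S (wseq n) := ⟨g, hgx, hgy, rfl⟩
        have hle : sInf (S (wseq n)) ≤ energy (wseq n) g :=
          csInf_le (hSbdd _ (hcond n)) hmem
        have hdiff := energy_diff_le (wseq n) w g (clamp_sq_le_one f)
        rw [abs_sub_le_iff] at hdiff
        have : energy (wseq n) g ≤ energy w g + D n := by
          have := hdiff.1; simp only [hD]; linarith
        linarith
      · -- sInf (S w) - ε < sInf (S (wseq n))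
        have hge : sInf (S w) - ε / 2 ≤ sInf (S (wseq n)) := by
          refine le_csInf (hSne _) ?_
          rintro e ⟨f', hfx', hfy', rfl⟩
          set g' := clamp f' with hg'
          have h1 : energy (wseq n) g' ≤ energy (wseq n) f' := clamp_energy_le (hcond n) f'
          have hdiff := energy_diff_le (wseq n) w g' (clamp_sq_le_one f')
          rw [abs_sub_le_iff] at hdiff
          have h2 : energy w g' ≤ energy (wseq n) g' + D n := by
            have := hdiff.2; simp only [hD]; linarith
          have hgx' : g' x = 1 := by simp [hg', clamp, hfx']
          have hgy' : g' y = 0 := by simp [hg', clamp, hfy']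
          have h3 : sInf (S w) ≤ energy w g' :=
            csInf_le (hSbdd _ hw) ⟨g', hgx', hgy', rfl⟩
          linarith
        linarith
    -- conclude via continuity of inversion
    have hne : sInf (S w) ≠ 0 := ne_of_gt (lt_of_lt_of_le hc hIpos)
    have := hItends.inv₀ hne
    simp only [effRes, if_neg hxy]
    convert this using 2
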